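/- Let α > 0 and C₀ > 0. There exists a constant C > 0, depending only on α and C₀, with the following property. For every probability space (Ω, P), every integer T ≥ 1, every family of measurable events W₁, …, W_T ⊆ Ω, and every family of measurable functions D₁, …, D_T : Ω → [0,1] such that for each t: (i) W_t ⊆ {ω : D_t(ω) > 0}, and (ii) P{ω : 0 < D_t(ω) ≤ δ} ≤ C₀·δ^α for every δ ∈ (0,1]; one has Σ_{t=1}^T P(W_t) ≤ C · T^{1/(α+1)} · (Σ_{t=1}^T ∫_{W_t} D_t dP)^{α/(α+1)}. -/

import Mathlib

open MeasureTheory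

universe u

/-- **Regret vs. inferior sampling rate** (measure-theoretic content of Lemma 3.1 of
Rigollet–Zeevi). For `α, C₀ > 0` there is a constant `C > 0`, depending only on `α` and
`C₀`, such that for every probability space `(Ω, P)`, horizon `T ≥ 1`, events
`W₁, …, W_T`, and `[0,1]`-valued measurable gaps `D₁, …, D_T` with `W_t ⊆ {D_t > 0}` and
the margin condition `P(0 < D_t ≤ δ) ≤ C₀ δ^α` for `δ ∈ (0,1]`, one has
`Σ_t P(W_t) ≤ C · T^{1/(α+1)} · (Σ_t ∫_{W_t} D_t dP)^{α/(α+1)}`. -/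
lemma step_bound {Ω : Type u} [MeasurableSpace Ω] (P : Measure Ω)
    [IsProbabilityMeasure P] {α C₀ : ℝ} (hα : 0 < α) (hC₀ : 0 < C₀)
    (W : Set Ω) (D : Ω → ℝ)
    (hW : MeasurableSet W) (hD : Measurable D)
    (hbd : ∀ ω, D ω ∈ Set.Icc (0:ℝ) 1)
    (hsub : W ⊆ {ω | 0 < D ω})
    (hmargin : ∀ δ ∈ Set.Ioc (0:ℝ) 1,
      P {ω | 0 < D ω ∧ D ω ≤ δ} ≤ ENNReal.ofReal (C₀ * δ ^ α))
    {δ : ℝ} (hδ : δ ∈ Set.Ioc (0:ℝ) 1) :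
    (P W).toReal ≤ C₀ * δ ^ α + (1/δ) * ∫ ω in W, D ω ∂P := by
  obtain ⟨hδ0, hδ1⟩ := hδ
  have hInt : Integrable D P := by
    refine (integrable_const (1:ℝ)).mono' hD.aestronglyMeasurable (ae_of_all _ fun ω => ?_)
    rw [Real.norm_eq_abs, abs_of_nonneg (hbd ω).1]; exact (hbd ω).2
  set A : Set Ω := W ∩ {ω | δ < D ω} with hAdef
  have hAm : MeasurableSet A := hW.inter (measurableSet_lt measurable_const hD)
  have hIW : 0 ≤ ∫ ω in W, D ω ∂P :=
    setIntegral_nonneg hW fun ω _ => (hbd ω).1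
  have hMarkov : δ * (P A).toReal ≤ ∫ ω in W, D ω ∂P := by
    have e1 : ∫ _ω in A, δ ∂P = (P A).toReal * δ := by
      simp [setIntegral_const, smul_eq_mul, measureReal_def]
    calc δ * (P A).toReal = ∫ _ω in A, δ ∂P := by rw [e1]; ring
      _ ≤ ∫ ω in A, D ω ∂P := by
          refine setIntegral_mono_on
            (integrableOn_const (measure_ne_top P _))
            hInt.integrableOn hAm fun ω hω => le_of_lt hω.2
      _ ≤ ∫ ω in W, D ω ∂P := by
          refine setIntegral_mono_set hInt.integrableOn
            (ae_of_all _ fun ω => (hbd ω).1)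
            (HasSubset.Subset.eventuallyLE Set.inter_subset_left)
  have hcover : W ⊆ {ω | 0 < D ω ∧ D ω ≤ δ} ∪ A := by
    intro ω hω
    rcases le_or_gt (D ω) δ with h | h
    · exact Or.inl ⟨hsub hω, h⟩
    · exact Or.inr ⟨hω, h⟩
  have h1 : P W ≤ P {ω | 0 < D ω ∧ D ω ≤ δ} + P A :=
    le_trans (measure_mono hcover) (measure_union_le _ _)
  have h2 : (P W).toReal ≤ (P {ω | 0 < D ω ∧ D ω ≤ δ}).toReal + (P A).toReal := by
    rw [← ENNReal.toReal_add (measure_ne_top P _) (measure_ne_top P _)]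
    exact ENNReal.toReal_mono (by finiteness) h1
  have h3 : (P {ω | 0 < D ω ∧ D ω ≤ δ}).toReal ≤ C₀ * δ ^ α :=
    ENNReal.toReal_le_of_le_ofReal (by positivity) (hmargin δ ⟨hδ0, hδ1⟩)
  have h4 : (P A).toReal ≤ (1/δ) * ∫ ω in W, D ω ∂P := by
    calc (P A).toReal = (1/δ) * (δ * (P A).toReal) := by field_simp
      _ ≤ (1/δ) * ∫ ω in W, D ω ∂P :=
          mul_le_mul_of_nonneg_left hMarkov (by positivity)
  linarith

theorem inferior_sampling_rate_le_regret
    (α C₀ : ℝ) (hα : 0 < α) (hC₀ : 0 < C₀) :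
    ∃ C : ℝ, 0 < C ∧
      ∀ (Ω : Type u) (_ : MeasurableSpace Ω) (P : Measure Ω), IsProbabilityMeasure P →
      ∀ (T : ℕ), 1 ≤ T →
      ∀ (W : Fin T → Set Ω) (D : Fin T → Ω → ℝ),
        (∀ t, MeasurableSet (W t)) →
        (∀ t, Measurable (D t)) →
        (∀ t ω, D t ω ∈ Set.Icc (0 : ℝ) 1) →
        (∀ t, W t ⊆ {ω | 0 < D t ω}) →
        (∀ t, ∀ δ ∈ Set.Ioc (0 : ℝ) 1,
          P {ω | 0 < D t ω ∧ D t ω ≤ δ} ≤ ENNReal.ofReal (C₀ * δ ^ α)) →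
        ∑ t, (P (W t)).toReal ≤
          C * (T : ℝ) ^ ((1 : ℝ) / (α + 1)) *
            (∑ t, ∫ ω in W t, D t ω ∂P) ^ (α / (α + 1)) := by
  set s : ℝ := 1 / (α + 1) with hs_def
  set e : ℝ := α / (α + 1) with he_def
  have hα1 : (0:ℝ) < α + 1 := by linarith
  have hs : 0 < s := by positivity
  have he : 0 < e := by positivity
  have hse : s + e = 1 := by
    rw [hs_def, he_def, ← add_div, add_comm, div_self (ne_of_gt hα1)]
  refine ⟨2 * C₀ ^ s + (1/C₀) ^ e, by positivity, ?_⟩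
  intro Ω _ P hP T hT W D hWm hDm hbd hsub hmargin
  set x : ℝ := ∑ t, (P (W t)).toReal with hx_def
  set R : ℝ := ∑ t, ∫ ω in W t, D t ω ∂P with hR_def
  have hR0 : 0 ≤ R :=
    Finset.sum_nonneg fun t _ => setIntegral_nonneg (hWm t) fun ω _ => (hbd t ω).1
  have hT0 : (0:ℝ) < (T:ℝ) := by exact_mod_cast Nat.lt_of_lt_of_le Nat.zero_lt_one hT
  have hx0 : 0 ≤ x := Finset.sum_nonneg fun t _ => ENNReal.toReal_nonneg
  have hxT : x ≤ (T:ℝ) := by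
    calc x ≤ ∑ _t : Fin T, (1:ℝ) := by
            refine Finset.sum_le_sum fun t _ => ?_
            exact ENNReal.toReal_le_of_le_ofReal zero_le_one (by simpa using prob_le_one)
      _ = (T:ℝ) := by simp
  have hsum : ∀ δ ∈ Set.Ioc (0:ℝ) 1, x ≤ C₀ * (T:ℝ) * δ ^ α + (1/δ) * R := by
    intro δ hδ
    calc x ≤ ∑ t, (C₀ * δ ^ α + (1/δ) * ∫ ω in W t, D t ω ∂P) := by
            refine Finset.sum_le_sum fun t _ => ?_
            exact step_bound P hα hC₀ (W t) (D t) (hWm t) (hDm t) (hbd t)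
              (hsub t) (hmargin t) hδ
      _ = C₀ * (T:ℝ) * δ ^ α + (1/δ) * R := by
          rw [Finset.sum_add_distrib]
          congr 1
          · simp [Finset.sum_const, Finset.card_univ]
            ring
          · rw [hR_def, Finset.mul_sum]
  rcases hR0.eq_or_lt with hR | hR
  · -- R = 0
    have hxle : x ≤ 0 := by
      refine le_of_forall_pos_le_add fun ε hε => ?_
      set u : ℝ := (ε / (C₀ * T)) ^ (1/α) with hu_def
      have hu0 : 0 < u := Real.rpow_pos_of_pos (by positivity) _
      set δ : ℝ := min 1 u with hδ_def
      have hδ0 : 0 < δ := lt_min one_pos hu0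
      have hδ1 : δ ≤ 1 := min_le_left _ _
      have hδα : δ ^ α ≤ ε / (C₀ * T) := by
        calc δ ^ α ≤ u ^ α := Real.rpow_le_rpow hδ0.le (min_le_right _ _) hα.le
          _ = ε / (C₀ * T) := by
              rw [hu_def, ← Real.rpow_mul (by positivity), one_div_mul_cancel (ne_of_gt hα),
                Real.rpow_one]
      have := hsum δ ⟨hδ0, hδ1⟩
      rw [← hR] at this
      have : x ≤ C₀ * (T:ℝ) * (ε / (C₀ * T)) := by
        calc x ≤ C₀ * (T:ℝ) * δ ^ α + (1/δ) * 0 := this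
          _ ≤ C₀ * (T:ℝ) * (ε / (C₀ * T)) + 0 := by
              have : C₀ * (T:ℝ) * δ ^ α ≤ C₀ * (T:ℝ) * (ε / (C₀ * T)) :=
                mul_le_mul_of_nonneg_left hδα (by positivity)
              linarith
          _ = C₀ * (T:ℝ) * (ε / (C₀ * T)) := by ring
      calc x ≤ C₀ * (T:ℝ) * (ε / (C₀ * T)) := this
        _ = ε := by field_simp
        _ = 0 + ε := by ring
    rw [← hR, Real.zero_rpow (ne_of_gt he)]
    calc x ≤ 0 := hxle
      _ ≤ _ := by positivity
  · -- R > 0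
    have hAs : (C₀ * (T:ℝ)) ^ s = C₀ ^ s * (T:ℝ) ^ s := Real.mul_rpow hC₀.le hT0.le
    rcases le_or_gt R (C₀ * T) with hRle | hRgt
    · -- optimal δ
      set A : ℝ := C₀ * (T:ℝ) with hA_def
      have hA0 : 0 < A := by positivity
      set δ : ℝ := (R / A) ^ s with hδ_def
      have hRA0 : 0 < R / A := by positivity
      have hδ0 : 0 < δ := Real.rpow_pos_of_pos hRA0 _
      have hδ1 : δ ≤ 1 :=
        Real.rpow_le_one hRA0.le (div_le_one_of_le₀ hRle hA0.le) hs.le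
      have hsα : s * α = e := by rw [hs_def, he_def]; ring
      have h5 : A ^ s = A / A ^ e := by
        rw [show s = 1 - e by linarith [hse], Real.rpow_sub hA0, Real.rpow_one]
      have h6 : R / R ^ s = R ^ e := by
        rw [show e = 1 - s by linarith [hse], Real.rpow_sub hR, Real.rpow_one]
      have key1 : A * δ ^ α = A ^ s * R ^ e := by
        rw [hδ_def, ← Real.rpow_mul hRA0.le, hsα, Real.div_rpow hR.le hA0.le, h5]
        ring
      have key2 : (1/δ) * R = A ^ s * R ^ e := by
        rw [hδ_def, Real.div_rpow hR.le hA0.le, one_div_div, ← h6]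
        ring
      have := hsum δ ⟨hδ0, hδ1⟩
      have hxb : x ≤ 2 * (A ^ s * R ^ e) := by
        calc x ≤ C₀ * (T:ℝ) * δ ^ α + (1/δ) * R := this
          _ = A * δ ^ α + (1/δ) * R := by rw [hA_def]
          _ = 2 * (A ^ s * R ^ e) := by rw [key1, key2]; ring
      calc x ≤ 2 * (A ^ s * R ^ e) := hxb
        _ = 2 * C₀ ^ s * ((T:ℝ) ^ s * R ^ e) := by rw [hAs]; ring
        _ ≤ (2 * C₀ ^ s + (1/C₀) ^ e) * ((T:ℝ) ^ s * R ^ e) := by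
            have h1 : (0:ℝ) < (1/C₀) ^ e := by positivity
            have h2 : (0:ℝ) ≤ (T:ℝ) ^ s * R ^ e := by positivity
            nlinarith
        _ = _ := by ring
    · -- R > C₀ T : use x ≤ T
      have hTle : (T:ℝ) ≤ R / C₀ := (le_div_iff₀ hC₀).mpr (by linarith [mul_comm C₀ (T:ℝ)])
      have hsplit : (T:ℝ) = (T:ℝ) ^ s * (T:ℝ) ^ e := by
        rw [← Real.rpow_add hT0, hse, Real.rpow_one]
      have h1 : (T:ℝ) ^ e ≤ (R / C₀) ^ e := Real.rpow_le_rpow hT0.le hTle he.le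
      have h2 : (R / C₀) ^ e = (1/C₀) ^ e * R ^ e := by
        rw [Real.div_rpow hR.le hC₀.le, Real.div_rpow zero_le_one hC₀.le, Real.one_rpow]
        ring
      calc x ≤ (T:ℝ) := hxT
        _ = (T:ℝ) ^ s * (T:ℝ) ^ e := hsplit
        _ ≤ (T:ℝ) ^ s * ((1/C₀) ^ e * R ^ e) := by
            rw [← h2]; exact mul_le_mul_of_nonneg_left h1 (by positivity)
        _ ≤ (2 * C₀ ^ s + (1/C₀) ^ e) * (T:ℝ) ^ s * R ^ e := by
            have h3 : (0:ℝ) < C₀ ^ s := by positivity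
            have h4 : (0:ℝ) ≤ (T:ℝ) ^ s * R ^ e := by positivity
            nlinarith [Real.rpow_pos_of_pos hT0 s, Real.rpow_pos_of_pos hR e]
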